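/- Let P ∈ ℝ^{N×N} be row-stochastic, γ ∈ (0,1), n a positive integer, and let P̂ be the random matrix whose i-th row is (1/n)Σ_{j=1}^{n} X_{ij}ᵀ, where {X_{ij} : 1 ≤ i ≤ N, 1 ≤ j ≤ n} are mutually independent random vectors, each X_{ij} taking values among the standard basis vectors e_1, …, e_N of ℝ^N with ℙ[X_{ij} = e_k] = P_{ik}. Set A = I − γP and Ŷ = γ(P − P̂)A^{-1}, and let κ = max_i |{j : P_{ij} > 0}| be the largest number of nonzero entries in any row of P. Then for any real C > 0 and any integer q > 1, if n ≥ (2C²γ²κ/(1 − γ)²)·log(2N^q), then ℙ[ρ(Ŷ) < 1/C] ≥ 1 − 1/N^{q−1}. -/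

import Mathlib

open MeasureTheory ProbabilityTheory Matrix BigOperators

section Aux

open Real

private lemma bern_hoeffding (p : ℝ) (hp0 : 0 ≤ p) (hp1 : p ≤ 1) (t : ℝ) :
    p * exp (t * (1 - p)) + (1 - p) * exp (-(t * p)) ≤ exp (t ^ 2 / 8) := by
  set φ : ℝ → ℝ := fun u => p * exp (u * (1 - p)) + (1 - p) * exp (-(u * p)) with hφdef
  set φd : ℝ → ℝ := fun u => p * (1 - p) * exp (u * (1 - p)) + (1 - p) * (-p) * exp (-(u * p))
    with hφddef
  set φdd : ℝ → ℝ := fun u => p * (1 - p) ^ 2 * exp (u * (1 - p)) + (1 - p) * p ^ 2 * exp (-(u * p))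
    with hφdddef
  have hφpos : ∀ u, 0 < φ u := by
    intro u
    rcases eq_or_lt_of_le hp0 with h | h
    · have hr : φ u = p * exp (u * (1 - p)) + (1 - p) * exp (-(u * p)) := rfl
      rw [hr, ← h]
      norm_num
    · have h2 : 0 ≤ (1 - p) * exp (-(u * p)) :=
        mul_nonneg (by linarith) (exp_pos _).le
      have h1 : 0 < p * exp (u * (1 - p)) := mul_pos h (exp_pos _)
      simp only [hφdef]; linarith
  have hder1 : ∀ (c u : ℝ), HasDerivAt (fun v : ℝ => exp (v * c)) (c * exp (u * c)) u := by
    intro c u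
    have := ((hasDerivAt_id u).mul_const c).exp
    simpa [mul_comm] using this
  have hder2 : ∀ (c u : ℝ), HasDerivAt (fun v : ℝ => exp (-(v * c))) (-c * exp (-(u * c))) u := by
    intro c u
    have := (((hasDerivAt_id u).mul_const c).neg).exp
    simpa [mul_comm] using this
  have hφ' : ∀ u, HasDerivAt φ (φd u) u := by
    intro u
    have h1 := ((hder1 (1 - p) u).const_mul p).add ((hder2 p u).const_mul (1 - p))
    refine (h1 : HasDerivAt φ _ u).congr_deriv ?_
    simp only [hφddef]; ring
  have hφd' : ∀ u, HasDerivAt φd (φdd u) u := by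
    intro u
    have h1 := ((hder1 (1 - p) u).const_mul (p * (1 - p))).add
      ((hder2 p u).const_mul ((1 - p) * (-p)))
    refine (h1 : HasDerivAt φd _ u).congr_deriv ?_
    simp only [hφdddef]; ring
  set G : ℝ → ℝ := fun u => u / 4 - φd u / φ u with hGdef
  set G' : ℝ → ℝ := fun u => 1 / 4 - (φdd u * φ u - φd u * φd u) / φ u ^ 2 with hG'def
  have hG : ∀ u, HasDerivAt G (G' u) u := by
    intro u
    exact ((hasDerivAt_id u).div_const 4).sub ((hφd' u).div (hφ' u) (hφpos u).ne')
  have hG'nonneg : ∀ u, 0 ≤ G' u := by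
    intro u
    have hpos2 : (0:ℝ) < φ u ^ 2 := pow_pos (hφpos u) 2
    simp only [hG'def, sub_nonneg]
    rw [div_le_iff₀ hpos2]
    simp only [hφdef, hφddef, hφdddef]
    nlinarith [sq_nonneg (p * exp (u * (1 - p)) - (1 - p) * exp (-(u * p)))]
  have hGmono : Monotone G := monotone_of_hasDerivAt_nonneg hG hG'nonneg
  have hφd0 : φd 0 = 0 := by
    simp only [hφddef, zero_mul, neg_zero, Real.exp_zero, mul_one]; ring
  have hG0 : G 0 = 0 := by
    simp only [hGdef, hφd0]; norm_num
  set h : ℝ → ℝ := fun u => u ^ 2 / 8 - Real.log (φ u) with hhdef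
  have hh : ∀ u, HasDerivAt h (G u) u := by
    intro u
    have h1 := ((hasDerivAt_pow 2 u).div_const 8).sub ((hφ' u).log (hφpos u).ne')
    refine (h1 : HasDerivAt h _ u).congr_deriv ?_
    simp only [hGdef]; ring
  have hcont : Continuous h := by
    have : Differentiable ℝ h := fun u => (hh u).differentiableAt
    exact this.continuous
  have hnonneg : ∀ u, 0 ≤ h u := by
    have h0 : h 0 = 0 := by simp [hhdef, hφdef]
    intro u
    rcases le_or_gt 0 u with hu | hu
    · have hmono : MonotoneOn h (Set.Ici 0) := by
        apply monotoneOn_of_hasDerivWithinAt_nonneg (convex_Ici 0) hcont.continuousOn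
          (f' := G) (fun x _ => (hh x).hasDerivWithinAt)
        intro x hx
        rw [interior_Ici] at hx
        have := hGmono (le_of_lt hx)
        rw [hG0] at this; exact this
      have := hmono Set.self_mem_Ici hu hu
      rw [h0] at this; exact this
    · have hanti : AntitoneOn h (Set.Iic 0) := by
        apply antitoneOn_of_hasDerivWithinAt_nonpos (convex_Iic 0) hcont.continuousOn
          (f' := G) (fun x _ => (hh x).hasDerivWithinAt)
        intro x hx
        rw [interior_Iic] at hx
        have := hGmono (le_of_lt hx)
        rw [hG0] at this; exact this
      have := hanti hu.le Set.self_mem_Iic hu.le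
      rw [h0] at this; exact this
  have hlog : Real.log (φ t) ≤ t ^ 2 / 8 := by
    have := hnonneg t
    simp only [hhdef] at this; linarith
  calc φ t = exp (Real.log (φ t)) := (Real.exp_log (hφpos t)).symm
    _ ≤ exp (t ^ 2 / 8) := exp_le_exp.mpr hlog

private lemma iIndepFun_precomp_of_injective {Ω ι ι' β : Type*} [MeasurableSpace Ω]
    [MeasurableSpace β] {μ : Measure Ω} [IsProbabilityMeasure μ] {f : ι → Ω → β}
    (h : iIndepFun f μ) {u : ι' → ι} (hu : Function.Injective u) :
    iIndepFun (fun j => f (u j)) μ := by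
  classical
  rw [iIndepFun_iff_measure_inter_preimage_eq_mul] at h ⊢
  intro S sets hsets
  rcases S.eq_empty_or_nonempty with rfl | hS
  · simp
  · have : Nonempty ι' := ⟨hS.choose⟩
    set sets' : ι → Set β := fun i => sets (Function.invFun u i) with hsets'
    have hS' : ∀ j ∈ S, sets' (u j) = sets j := by
      intro j _
      simp only [hsets', Function.leftInverse_invFun hu j]
    have h1 : μ (⋂ j ∈ S, f (u j) ⁻¹' sets j) = μ (⋂ i ∈ S.image u, f i ⁻¹' sets' i) := by
      congr 1
      rw [Finset.set_biInter_finset_image]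
      exact Set.iInter₂_congr fun j hj => by rw [hS' j hj]
    have h2 : μ (⋂ i ∈ S.image u, f i ⁻¹' sets' i) = ∏ i ∈ S.image u, μ (f i ⁻¹' sets' i) := by
      apply h
      intro i hi
      rcases Finset.mem_image.mp hi with ⟨j, hj, rfl⟩
      rw [hS' j hj]; exact hsets j hj
    rw [h1, h2, Finset.prod_image (fun a _ b _ hab => hu hab)]
    exact Finset.prod_congr rfl fun j hj => by rw [hS' j hj]

attribute [local instance] Matrix.linftyOpNormedAddCommGroup Matrix.linftyOpNormedSpace
  Matrix.linftyOpNormedRing Matrix.linftyOpNormedAlgebra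

private lemma norm_map_ofReal {N : ℕ} (M : Matrix (Fin N) (Fin N) ℝ) :
    ‖M.map Complex.ofReal‖ = ‖M‖ := by
  have h : (fun i => ∑ j, ‖(M.map Complex.ofReal) i j‖₊) = fun i => ∑ j, ‖M i j‖₊ := by
    funext i
    exact Finset.sum_congr rfl fun j _ => by rw [Matrix.map_apply, Complex.nnnorm_real]
  rw [Matrix.linfty_opNorm_def, Matrix.linfty_opNorm_def, h]

private lemma norm_lt_of_rows {N : ℕ} (M : Matrix (Fin N) (Fin N) ℝ) {ε : ℝ} (hε : 0 < ε)
    (h : ∀ i, ∑ j, |M i j| < ε) : ‖M‖ < ε := by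
  rw [Matrix.linfty_opNorm_def]
  have key : Finset.univ.sup (fun i => ∑ j, ‖M i j‖₊) < ε.toNNReal := by
    rw [Finset.sup_lt_iff (by simpa using Real.toNNReal_pos.mpr hε)]
    intro i _
    rw [← NNReal.coe_lt_coe, Real.coe_toNNReal _ hε.le]
    push_cast
    simpa [Real.norm_eq_abs] using h i
  calc ((Finset.univ.sup fun i => ∑ j, ‖M i j‖₊ : NNReal) : ℝ) < (ε.toNNReal : ℝ) :=
        NNReal.coe_lt_coe.mpr key
    _ = ε := Real.coe_toNNReal _ hε.le

private lemma norm_le_of_rows {N : ℕ} (M : Matrix (Fin N) (Fin N) ℝ) {r : ℝ} (hr : 0 ≤ r)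
    (h : ∀ i, ∑ j, |M i j| ≤ r) : ‖M‖ ≤ r := by
  rw [Matrix.linfty_opNorm_def]
  have key : Finset.univ.sup (fun i => ∑ j, ‖M i j‖₊) ≤ r.toNNReal := by
    rw [Finset.sup_le_iff]
    intro i _
    rw [← NNReal.coe_le_coe, Real.coe_toNNReal _ hr]
    push_cast
    simpa [Real.norm_eq_abs] using h i
  calc ((Finset.univ.sup fun i => ∑ j, ‖M i j‖₊ : NNReal) : ℝ) ≤ (r.toNNReal : ℝ) :=
        NNReal.coe_le_coe.mpr key
    _ = r := Real.coe_toNNReal _ hr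

private lemma spec_bound {N : ℕ} [NeZero N] (P Phat : Matrix (Fin N) (Fin N) ℝ) {γ C : ℝ}
    (hγ : γ ∈ Set.Ioo (0:ℝ) 1) (hC : 0 < C) (hP : ‖P‖ ≤ 1)
    (hΔ : ‖P - Phat‖ < (1 - γ) / (C * γ)) :
    ∀ z ∈ spectrum ℂ (((γ • (P - Phat)) * (1 - γ • P)⁻¹).map Complex.ofReal), ‖z‖ < 1 / C := by
  haveI : Nonempty (Fin N) := Fin.pos_iff_nonempty.mp (Nat.pos_of_ne_zero (NeZero.ne N))
  haveI : CompleteSpace (Matrix (Fin N) (Fin N) ℝ) := FiniteDimensional.complete ℝ _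
  haveI : CompleteSpace (Matrix (Fin N) (Fin N) ℂ) := FiniteDimensional.complete ℂ _
  obtain ⟨hγ0, hγ1⟩ := hγ
  intro z hz
  have h1 : ‖z‖ ≤ ‖(((γ • (P - Phat)) * (1 - γ • P)⁻¹).map Complex.ofReal)‖ :=
    spectrum.norm_le_norm_of_mem hz
  rw [norm_map_ofReal] at h1
  have hsm : ‖γ • P‖ = γ * ‖P‖ := by
    rw [norm_smul, Real.norm_eq_abs, abs_of_pos hγ0]
  have hγP : ‖γ • P‖ < 1 := by
    rw [hsm]
    nlinarith [norm_nonneg P]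
  have hinv : ‖(1 - γ • P)⁻¹‖ ≤ (1 - γ)⁻¹ := by
    rw [Matrix.nonsing_inv_eq_ringInverse, ← geom_series_eq_inverse _ hγP]
    refine (tsum_geometric_le_of_norm_lt_one _ hγP).trans ?_
    rw [norm_one]
    have h2 : 1 - γ ≤ 1 - ‖γ • P‖ := by rw [hsm]; nlinarith [norm_nonneg P]
    have h3 : (1 - ‖γ • P‖)⁻¹ ≤ (1 - γ)⁻¹ := by
      apply inv_anti₀ (by linarith) h2
    linarith
  have hC' : C ≠ 0 := hC.ne'
  have hγ' : γ ≠ 0 := hγ0.ne'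
  have h1γ : (1:ℝ) - γ ≠ 0 := sub_ne_zero_of_ne (by linarith)
  calc ‖z‖ ≤ ‖(γ • (P - Phat)) * (1 - γ • P)⁻¹‖ := h1
    _ ≤ ‖γ • (P - Phat)‖ * ‖(1 - γ • P)⁻¹‖ := Matrix.linfty_opNorm_mul _ _
    _ ≤ ‖γ • (P - Phat)‖ * (1 - γ)⁻¹ :=
        mul_le_mul_of_nonneg_left hinv (norm_nonneg _)
    _ = γ * ‖P - Phat‖ * (1 - γ)⁻¹ := by
        rw [norm_smul, Real.norm_eq_abs, abs_of_pos hγ0]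
    _ < γ * ((1 - γ) / (C * γ)) * (1 - γ)⁻¹ := by
        apply mul_lt_mul_of_pos_right (mul_lt_mul_of_pos_left hΔ hγ0)
        apply inv_pos.mpr
        linarith
    _ = 1 / C := by field_simp

/-- In the multinomial sampling model (`P` row-stochastic, `γ ∈ (0,1)`,
`P̂` with `i`-th row `(1/n) Σ_j X_{ij}ᵀ`, the `X_{ij}` mutually independent with values among
the standard basis vectors and `ℙ[X_{ij} = e_k] = P_{ik}`), set `A = I − γP`,
`Ŷ = γ(P − P̂)A⁻¹`, and let `κ` be the largest number of nonzero entries in any row of `P`.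
For any real `C > 0` and integer `q > 1`, if `n ≥ (2C²γ²κ/(1−γ)²)·log(2N^q)`, then with
probability at least `1 − 1/N^{q−1}`, every complex eigenvalue of `Ŷ` has modulus `< 1/C`
(i.e. `ρ(Ŷ) < 1/C`). -/
theorem stmt19 {N : ℕ} [NeZero N] {Ω : Type*} [MeasurableSpace Ω]
    (μ : Measure Ω) [IsProbabilityMeasure μ]
    (P : Matrix (Fin N) (Fin N) ℝ) (hP0 : ∀ i j, 0 ≤ P i j) (hP1 : ∀ i, ∑ j, P i j = 1)
    (γ : ℝ) (hγ : γ ∈ Set.Ioo (0 : ℝ) 1)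
    (n : ℕ) (hn : 0 < n)
    (X : Fin N → Fin n → Ω → (Fin N → ℝ))
    (hXmeas : ∀ i j, Measurable (X i j))
    (hXval : ∀ i j ω, ∃ k : Fin N, X i j ω = Pi.single k 1)
    (hXprob : ∀ i j k, μ {ω | X i j ω = Pi.single k 1} = ENNReal.ofReal (P i k))
    (hXindep : iIndepFun (fun p : Fin N × Fin n => X p.1 p.2) μ)
    (C : ℝ) (hC : 0 < C) (q : ℕ) (hq : 1 < q)
    (κ : ℕ)
    (hκ : κ = Finset.univ.sup (fun i => (Finset.univ.filter (fun j => P i j ≠ 0)).card))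
    (hsample : 2 * C ^ 2 * γ ^ 2 * (κ : ℝ)
        / (1 - γ) ^ 2 * Real.log (2 * (N : ℝ) ^ q) ≤ (n : ℝ)) :
    letI A : Matrix (Fin N) (Fin N) ℝ := 1 - γ • P
    letI Phat : Ω → Matrix (Fin N) (Fin N) ℝ :=
      fun ω => Matrix.of fun i l => (n : ℝ)⁻¹ * ∑ j, X i j ω l
    letI Yhat : Ω → Matrix (Fin N) (Fin N) ℝ := fun ω => (γ • (P - Phat ω)) * A⁻¹
    ENNReal.ofReal (1 - 1 / (N : ℝ) ^ (q - 1))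
      ≤ μ {ω | ∀ z ∈ spectrum ℂ ((Yhat ω).map Complex.ofReal), ‖z‖ < 1 / C} := by
  classical
  show ENNReal.ofReal (1 - 1 / (N : ℝ) ^ (q - 1))
      ≤ μ {ω | ∀ z ∈ spectrum ℂ
          (((γ • (P - Matrix.of fun i l => (n : ℝ)⁻¹ * ∑ j, X i j ω l)) *
            (1 - γ • P)⁻¹).map Complex.ofReal), ‖z‖ < 1 / C}
  have hγ0 : 0 < γ := hγ.1
  have hγ1 : γ < 1 := hγ.2
  have hNpos : 0 < N := Nat.pos_of_ne_zero (NeZero.ne N)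
  have hN1 : (1:ℝ) ≤ (N:ℝ) := by exact_mod_cast hNpos
  set ε : ℝ := (1 - γ) / (C * γ) with hεdef
  have hεpos : 0 < ε := div_pos (by linarith) (mul_pos hC hγ0)
  -- sign vectors and centered variables
  set s : (Fin N → Bool) → Fin N → ℝ := fun σ l => if σ l then 1 else -1 with hsdef
  set c : Fin N → (Fin N → Bool) → ℝ := fun i σ => ∑ l, s σ l * P i l with hcdef
  set Z : Fin N → (Fin N → Bool) → Fin n → Ω → ℝ :=
    fun i σ j ω => c i σ - ∑ l, s σ l * X i j ω l with hZdef
  set bad : Fin N → (Fin N → Bool) → Set Ω :=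
    fun i σ => {ω | (n:ℝ) * ε ≤ ∑ j, Z i σ j ω} with hbaddef
  set F : Fin N → Finset (Fin N → Bool) :=
    fun i => Finset.univ.filter (fun σ => ∀ l, P i l = 0 → σ l = true) with hFdef
  set Nbad : Set Ω :=
    ⋃ i, ⋃ j, ⋃ l, ⋃ (_ : P i l = 0), {ω | X i j ω = Pi.single l 1} with hNbaddef
  set Bad : Set Ω := ⋃ i, ⋃ σ ∈ F i, bad i σ with hBaddef
  -- basic facts
  have hs_abs : ∀ σ l, |s σ l| = 1 := by
    intro σ l; simp only [hsdef]; split <;> norm_num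
  have hsingle : ∀ (σ : Fin N → Bool) (k : Fin N),
      (∑ l, s σ l * (Pi.single k 1 : Fin N → ℝ) l) = s σ k := by
    intro σ k
    rw [Finset.sum_eq_single k]
    · rw [Pi.single_eq_same, mul_one]
    · intro l _ hlk; rw [Pi.single_eq_of_ne hlk, mul_zero]
    · intro hk; exact absurd (Finset.mem_univ k) hk
  have hc1 : ∀ i σ, |c i σ| ≤ 1 := by
    intro i σ
    calc |c i σ| ≤ ∑ l, |s σ l * P i l| := Finset.abs_sum_le_sum_abs _ _
      _ = ∑ l, P i l := Finset.sum_congr rfl fun l _ => by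
          rw [abs_mul, hs_abs, one_mul, abs_of_nonneg (hP0 i l)]
      _ = 1 := hP1 i
  have habs : ∀ i σ j ω, |Z i σ j ω| ≤ 2 := by
    intro i σ j ω
    obtain ⟨k, hk⟩ := hXval i j ω
    have h2 : |∑ l, s σ l * X i j ω l| = 1 := by
      rw [hk, hsingle σ k, hs_abs]
    calc |Z i σ j ω| ≤ |c i σ| + |∑ l, s σ l * X i j ω l| := abs_sub _ _
      _ ≤ 2 := by rw [h2]; linarith [hc1 i σ]
  have hmeasZ : ∀ i σ j, Measurable (Z i σ j) := by
    intro i σ j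
    apply Measurable.sub measurable_const
    apply Finset.measurable_sum
    intro l _
    exact ((measurable_pi_apply l).comp (hXmeas i j)).const_mul (s σ l)
  have hcellm : ∀ i j (k : Fin N), MeasurableSet {ω | X i j ω = Pi.single k 1} :=
    fun i j k => hXmeas i j (measurableSet_singleton (Pi.single k 1))
  have hindep : ∀ i σ, iIndepFun (fun j => Z i σ j) μ := by
    intro i σ
    have h1 : iIndepFun (fun j : Fin n => X i j) μ :=
      iIndepFun_precomp_of_injective hXindep
        (u := fun j : Fin n => ((i, j) : Fin N × Fin n))
        (fun a b hab => (Prod.ext_iff.mp hab).2)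
    have h2 := h1.comp (fun _ => fun v : Fin N → ℝ => c i σ - ∑ l, s σ l * v l)
      (fun _ => measurable_const.sub (Finset.measurable_sum Finset.univ
        (fun l _ => by fun_prop)))
    exact h2
  -- moment generating function bound for a single summand
  have hmgf : ∀ i σ (t : ℝ) j, mgf (Z i σ j) μ t ≤ Real.exp (t^2/2) := by
    intro i σ t j
    set p : ℝ := ∑ k ∈ Finset.univ.filter (fun k => σ k = true), P i k with hpdef
    -- pointwise decomposition of the integrand over the cells {X i j = e_k}
    have hpt : (fun ω => Real.exp (t * Z i σ j ω))
        = fun ω => ∑ k, Set.indicator {ω' | X i j ω' = Pi.single k 1}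
            (fun _ => Real.exp (t * (c i σ - s σ k))) ω := by
      funext ω
      obtain ⟨k₀, hk₀⟩ := hXval i j ω
      have hkeq : ∀ k, ω ∈ {ω' | X i j ω' = Pi.single k 1} → k = k₀ := by
        intro k hmem
        by_contra hkk
        have h2 : (Pi.single k 1 : Fin N → ℝ) = Pi.single k₀ 1 :=
          (Set.mem_setOf_eq ▸ hmem).symm.trans hk₀
        have h3 := congrFun h2 k
        rw [Pi.single_eq_same, Pi.single_eq_of_ne hkk] at h3
        norm_num at h3
      rw [Finset.sum_eq_single k₀]
      · rw [Set.indicator_of_mem (show ω ∈ {ω' | X i j ω' = Pi.single k₀ 1} from hk₀)]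
        have hZω : Z i σ j ω = c i σ - s σ k₀ := by
          simp only [hZdef]
          rw [hk₀, hsingle σ k₀]
        rw [hZω]
      · intro k _ hk
        exact Set.indicator_of_notMem (fun hmem => hk (hkeq k hmem)) _
      · intro hk; exact absurd (Finset.mem_univ k₀) hk
    have hmgf_eq : mgf (Z i σ j) μ t = ∑ k, P i k * Real.exp (t * (c i σ - s σ k)) := by
      simp only [mgf]
      rw [hpt, integral_finset_sum _
        (fun k _ => (integrable_const _).indicator (hcellm i j k))]
      refine Finset.sum_congr rfl (fun k _ => ?_)
      rw [integral_indicator_const _ (hcellm i j k), measureReal_def, hXprob i j k, smul_eq_mul,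
        ENNReal.toReal_ofReal (hP0 i k)]
    have hp0' : 0 ≤ p := Finset.sum_nonneg fun k _ => hP0 i k
    have hsplit : p + ∑ k ∈ Finset.univ.filter (fun k => ¬ (σ k = true)), P i k = 1 := by
      rw [hpdef, Finset.sum_filter_add_sum_filter_not]
      exact hP1 i
    have hqnn : 0 ≤ ∑ k ∈ Finset.univ.filter (fun k => ¬ (σ k = true)), P i k :=
      Finset.sum_nonneg fun k _ => hP0 i k
    have hp1' : p ≤ 1 := by linarith
    have hcp : c i σ = 2 * p - 1 := by
      have e1 : ∑ l ∈ Finset.univ.filter (fun k => σ k = true), s σ l * P i l = p := by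
        rw [hpdef]
        refine Finset.sum_congr rfl (fun l hl => ?_)
        have hσl : σ l = true := (Finset.mem_filter.mp hl).2
        simp only [hsdef, hσl, if_true, one_mul]
      have e2 : ∑ l ∈ Finset.univ.filter (fun k => ¬ (σ k = true)), s σ l * P i l
          = -(1 - p) := by
        have e3 : ∑ l ∈ Finset.univ.filter (fun k => ¬ (σ k = true)), s σ l * P i l
            = ∑ l ∈ Finset.univ.filter (fun k => ¬ (σ k = true)), -(P i l) := by
          refine Finset.sum_congr rfl (fun l hl => ?_)
          have hσl : ¬ (σ l = true) := (Finset.mem_filter.mp hl).2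
          norm_num [hsdef, hσl]
        rw [e3, Finset.sum_neg_distrib]
        have : ∑ l ∈ Finset.univ.filter (fun k => ¬ (σ k = true)), P i l = 1 - p := by
          linarith
        rw [this]
      calc c i σ = ∑ l, s σ l * P i l := rfl
        _ = (∑ l ∈ Finset.univ.filter (fun k => σ k = true), s σ l * P i l)
            + ∑ l ∈ Finset.univ.filter (fun k => ¬ (σ k = true)), s σ l * P i l :=
          (Finset.sum_filter_add_sum_filter_not _ _ _).symm
        _ = p + -(1 - p) := by rw [e1, e2]
        _ = 2 * p - 1 := by ring
    have hgrp : ∑ k, P i k * Real.exp (t * (c i σ - s σ k))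
        = p * Real.exp (t * (c i σ - 1)) + (1 - p) * Real.exp (t * (c i σ + 1)) := by
      have e1 : ∑ k ∈ Finset.univ.filter (fun k => σ k = true),
          P i k * Real.exp (t * (c i σ - s σ k)) = p * Real.exp (t * (c i σ - 1)) := by
        rw [hpdef, Finset.sum_mul]
        refine Finset.sum_congr rfl (fun k hk => ?_)
        have hσk : σ k = true := (Finset.mem_filter.mp hk).2
        simp only [hsdef, hσk, if_true]
      have e2 : ∑ k ∈ Finset.univ.filter (fun k => ¬ (σ k = true)),
          P i k * Real.exp (t * (c i σ - s σ k)) = (1 - p) * Real.exp (t * (c i σ + 1)) := by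
        have h1p : ∑ k ∈ Finset.univ.filter (fun k => ¬ (σ k = true)), P i k = 1 - p := by
          linarith
        rw [← h1p, Finset.sum_mul]
        refine Finset.sum_congr rfl (fun k hk => ?_)
        have hσk : ¬ (σ k = true) := (Finset.mem_filter.mp hk).2
        norm_num [hsdef, hσk, sub_neg_eq_add]
      rw [← Finset.sum_filter_add_sum_filter_not Finset.univ (fun k => σ k = true), e1, e2]
    rw [hmgf_eq, hgrp, hcp]
    have hb := bern_hoeffding p hp0' hp1' (-2*t)
    have e3 : t * (2*p - 1 - 1) = (-2*t) * (1 - p) := by ring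
    have e4 : t * (2*p - 1 + 1) = -((-2*t) * p) := by ring
    have e5 : (-2*t)^2/8 = t^2/2 := by ring
    rw [e3, e4]
    calc p * Real.exp ((-2*t) * (1 - p)) + (1 - p) * Real.exp (-((-2*t) * p))
        ≤ Real.exp ((-2*t)^2/8) := hb
      _ = Real.exp (t^2/2) := by rw [e5]
  -- Chernoff bound for each bad event
  have hbadprob : ∀ i σ, μ (bad i σ) ≤ ENNReal.ofReal (Real.exp (-((n:ℝ) * ε^2/2))) := by
    intro i σ
    set Zs : Ω → ℝ := fun ω => ∑ j, Z i σ j ω with hZsdef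
    have hZseq : Zs = ∑ j : Fin n, Z i σ j := by
      funext ω; rw [Finset.sum_apply]
    have hZsmeas : Measurable Zs := Finset.measurable_sum _ fun j _ => hmeasZ i σ j
    have hZsbd : ∀ ω, Zs ω ≤ 2 * n := by
      intro ω
      calc Zs ω ≤ ∑ j, |Z i σ j ω| := Finset.sum_le_sum fun j _ => le_abs_self _
        _ ≤ ∑ _j : Fin n, (2:ℝ) := Finset.sum_le_sum fun j _ => habs i σ j ω
        _ = 2 * n := by
          rw [Finset.sum_const, Finset.card_univ, Fintype.card_fin, nsmul_eq_mul]; ring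
    have hInt : Integrable (fun ω => Real.exp (ε * Zs ω)) μ := by
      refine ⟨(Measurable.aestronglyMeasurable ?_), ?_⟩
      · exact (hZsmeas.const_mul ε).exp
      · apply HasFiniteIntegral.of_bounded (C := Real.exp (ε * (2 * n)))
        apply ae_of_all
        intro ω
        rw [Real.norm_eq_abs, Real.abs_exp]
        exact Real.exp_le_exp.mpr (mul_le_mul_of_nonneg_left (hZsbd ω) hεpos.le)
    have h1 : (μ {ω | (n:ℝ)*ε ≤ Zs ω}).toReal ≤ Real.exp (-ε * ((n:ℝ)*ε)) * mgf Zs μ ε :=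
      measure_ge_le_exp_mul_mgf ((n:ℝ)*ε) hεpos.le hInt
    have h2 : mgf Zs μ ε ≤ Real.exp ((n:ℝ) * ε^2/2) := by
      rw [hZseq, (hindep i σ).mgf_sum (fun j => hmeasZ i σ j) Finset.univ]
      calc ∏ j : Fin n, mgf (Z i σ j) μ ε ≤ ∏ _j : Fin n, Real.exp (ε^2/2) :=
          Finset.prod_le_prod (fun j _ => mgf_nonneg) (fun j _ => hmgf i σ ε j)
        _ = Real.exp (ε^2/2) ^ n := by rw [Finset.prod_const, Finset.card_univ, Fintype.card_fin]
        _ = Real.exp ((n:ℝ) * (ε^2/2)) := (Real.exp_nat_mul _ n).symm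
        _ = Real.exp ((n:ℝ) * ε^2/2) := by ring_nf
    have h3 : (μ (bad i σ)).toReal ≤ Real.exp (-((n:ℝ) * ε^2/2)) := by
      have hb : bad i σ = {ω | (n:ℝ)*ε ≤ Zs ω} := rfl
      rw [hb]
      calc (μ {ω | (n:ℝ)*ε ≤ Zs ω}).toReal
          ≤ Real.exp (-ε * ((n:ℝ)*ε)) * mgf Zs μ ε := h1
        _ ≤ Real.exp (-ε * ((n:ℝ)*ε)) * Real.exp ((n:ℝ) * ε^2/2) :=
            mul_le_mul_of_nonneg_left h2 (Real.exp_nonneg _)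
        _ = Real.exp (-((n:ℝ) * ε^2/2)) := by
            rw [← Real.exp_add]; congr 1; ring
    calc μ (bad i σ) = ENNReal.ofReal ((μ (bad i σ)).toReal) :=
        (ENNReal.ofReal_toReal (measure_ne_top μ _)).symm
      _ ≤ ENNReal.ofReal (Real.exp (-((n:ℝ) * ε^2/2))) := ENNReal.ofReal_le_ofReal h3
  -- null part
  have hNbad0 : μ Nbad = 0 := by
    rw [hNbaddef]
    refine measure_iUnion_null fun i => measure_iUnion_null fun j =>
      measure_iUnion_null fun l => measure_iUnion_null fun hPil => ?_
    rw [hXprob i j l, hPil]; simp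
  -- cardinality of sign classes
  have hcard : ∀ i, (F i).card ≤ 2 ^ κ := by
    intro i
    set Si : Finset (Fin N) := Finset.univ.filter (fun l => P i l ≠ 0) with hSidef
    have hSiκ : Si.card ≤ κ :=
      hκ ▸ Finset.le_sup (f := fun i => (Finset.univ.filter (fun j => P i j ≠ 0)).card)
        (Finset.mem_univ i)
    have h1 : (F i).card ≤ Fintype.card ({l // l ∈ Si} → Bool) := by
      rw [← Finset.card_univ]
      apply Finset.card_le_card_of_injOn (fun σ (l : {l // l ∈ Si}) => σ l.1)
        (fun σ _ => Finset.mem_univ _)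
      intro σ₁ hσ₁ σ₂ hσ₂ heq
      have hσ₁' := (Finset.mem_filter.mp hσ₁).2
      have hσ₂' := (Finset.mem_filter.mp hσ₂).2
      funext l
      by_cases hl : P i l = 0
      · rw [hσ₁' l hl, hσ₂' l hl]
      · have hlSi : l ∈ Si := Finset.mem_filter.mpr ⟨Finset.mem_univ _, hl⟩
        exact congrFun heq ⟨l, hlSi⟩
    have h2 : Fintype.card ({l // l ∈ Si} → Bool) = 2 ^ Si.card := by
      rw [Fintype.card_fun, Fintype.card_bool, Fintype.card_coe]
    calc (F i).card ≤ 2 ^ Si.card := h2 ▸ h1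
      _ ≤ 2 ^ κ := Nat.pow_le_pow_right (by norm_num) hSiκ
  have hκ1 : 1 ≤ κ := by
    have h1 : ∃ j, P ⟨0, hNpos⟩ j ≠ 0 := by
      by_contra hcon; push_neg at hcon
      have h2 := hP1 ⟨0, hNpos⟩
      rw [Finset.sum_congr rfl (fun j _ => hcon j)] at h2
      simp at h2
    obtain ⟨j0, hj0⟩ := h1
    have h2 : 0 < (Finset.univ.filter (fun j => P ⟨0, hNpos⟩ j ≠ 0)).card :=
      Finset.card_pos.mpr ⟨j0, Finset.mem_filter.mpr ⟨Finset.mem_univ _, hj0⟩⟩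
    calc 1 ≤ (Finset.univ.filter (fun j => P ⟨0, hNpos⟩ j ≠ 0)).card := h2
      _ ≤ κ := hκ ▸ Finset.le_sup (f := fun i => (Finset.univ.filter (fun j => P i j ≠ 0)).card)
          (Finset.mem_univ (⟨0, hNpos⟩ : Fin N))
  -- the real-number tail computation
  have hreal : (N:ℝ) * (2:ℝ)^κ * Real.exp (-((n:ℝ)*ε^2/2)) ≤ 1/(N:ℝ)^(q-1) := by
    have hNq1 : (1:ℝ) ≤ (N:ℝ)^q := one_le_pow₀ hN1
    have hL0 : 0 ≤ Real.log (2 * (N:ℝ)^q) := Real.log_nonneg (by linarith)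
    have hC' : C ≠ 0 := hC.ne'
    have hγ' : γ ≠ 0 := hγ0.ne'
    have h1γ : (1:ℝ) - γ ≠ 0 := sub_ne_zero_of_ne (by linarith)
    have hkey : (κ:ℝ) * Real.log (2*(N:ℝ)^q) ≤ (n:ℝ) * ε^2 / 2 := by
      have hεsq : ε^2 = (1-γ)^2/(C^2*γ^2) := by
        rw [hεdef]; rw [div_pow]; congr 1; ring
      have h2 : 2*C^2*γ^2*(κ:ℝ)/(1-γ)^2 * Real.log (2*(N:ℝ)^q) * (ε^2/2)
          = (κ:ℝ) * Real.log (2*(N:ℝ)^q) := by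
        rw [hεsq]; field_simp
      rw [← h2]
      calc 2*C^2*γ^2*(κ:ℝ)/(1-γ)^2 * Real.log (2*(N:ℝ)^q) * (ε^2/2)
          ≤ (n:ℝ) * (ε^2/2) := mul_le_mul_of_nonneg_right hsample (by positivity)
        _ = (n:ℝ) * ε^2 / 2 := by ring
    have hexp : Real.exp (-((n:ℝ)*ε^2/2)) ≤ ((2*(N:ℝ)^q)^κ)⁻¹ := by
      have h3 : ((2*(N:ℝ)^q)^κ) = Real.exp ((κ:ℝ) * Real.log (2*(N:ℝ)^q)) := by
        rw [Real.exp_nat_mul, Real.exp_log (by positivity)]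
      rw [h3, ← Real.exp_neg]
      exact Real.exp_le_exp.mpr (by linarith)
    calc (N:ℝ) * 2^κ * Real.exp (-((n:ℝ)*ε^2/2))
        ≤ (N:ℝ) * 2^κ * ((2*(N:ℝ)^q)^κ)⁻¹ :=
          mul_le_mul_of_nonneg_left hexp (by positivity)
      _ = (N:ℝ) * (((N:ℝ)^q)^κ)⁻¹ := by
        rw [mul_pow, mul_inv]
        have h2κ : (2:ℝ)^κ ≠ 0 := by positivity
        field_simp
      _ ≤ (N:ℝ) * ((N:ℝ)^q)⁻¹ := by
        apply mul_le_mul_of_nonneg_left _ (by positivity)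
        apply inv_anti₀ (by positivity)
        exact le_self_pow₀ hNq1 (by omega)
      _ = 1/(N:ℝ)^(q-1) := by
        have hq' : q = (q-1)+1 := by omega
        rw [hq', pow_succ, Nat.add_sub_cancel]
        have hN0 : (N:ℝ) ≠ 0 := by positivity
        have hNq10 : (N:ℝ)^(q-1) ≠ 0 := by positivity
        field_simp
  -- union bound
  have hBadle : μ Bad ≤ ENNReal.ofReal (1/(N:ℝ)^(q-1)) := by
    set δ : ENNReal := ENNReal.ofReal (Real.exp (-((n:ℝ) * ε^2/2))) with hδdef
    calc μ Bad ≤ ∑ i : Fin N, μ (⋃ σ ∈ F i, bad i σ) := by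
          rw [hBaddef]; exact measure_iUnion_fintype_le μ _
      _ ≤ ∑ i : Fin N, ∑ σ ∈ F i, μ (bad i σ) :=
          Finset.sum_le_sum fun i _ => measure_biUnion_finset_le _ _
      _ ≤ ∑ i : Fin N, ∑ _σ ∈ F i, δ :=
          Finset.sum_le_sum fun i _ => Finset.sum_le_sum fun σ _ => hbadprob i σ
      _ = ∑ i : Fin N, ((F i).card : ENNReal) * δ := by
          simp [Finset.sum_const, nsmul_eq_mul]
      _ ≤ ∑ _i : Fin N, ((2^κ : ℕ) : ENNReal) * δ := by
          refine Finset.sum_le_sum fun i _ => ?_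
          exact mul_le_mul_left (by exact_mod_cast hcard i) δ
      _ = ((N : ℕ) : ENNReal) * (((2^κ : ℕ) : ENNReal) * δ) := by
          rw [Finset.sum_const, Finset.card_univ, Fintype.card_fin, nsmul_eq_mul]
      _ ≤ ENNReal.ofReal (1/(N:ℝ)^(q-1)) := by
          rw [hδdef]
          rw [show ((N : ℕ) : ENNReal) = ENNReal.ofReal ((N:ℕ):ℝ) from
            (ENNReal.ofReal_natCast _).symm]
          rw [show ((2^κ : ℕ) : ENNReal) = ENNReal.ofReal ((2^κ:ℕ):ℝ) from
            (ENNReal.ofReal_natCast _).symm]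
          rw [← ENNReal.ofReal_mul (by positivity), ← ENNReal.ofReal_mul (by positivity)]
          apply ENNReal.ofReal_le_ofReal
          calc ((N:ℕ):ℝ) * (((2^κ:ℕ):ℝ) * Real.exp (-((n:ℝ) * ε^2/2)))
              = (N:ℝ) * (2:ℝ)^κ * Real.exp (-((n:ℝ)*ε^2/2)) := by push_cast; ring
            _ ≤ 1/(N:ℝ)^(q-1) := hreal
  -- the good event is contained in the target event
  have hsubset : (Bad ∪ Nbad)ᶜ ⊆ {ω | ∀ z ∈ spectrum ℂ
      (((γ • (P - Matrix.of fun i l => (n : ℝ)⁻¹ * ∑ j, X i j ω l)) *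
        (1 - γ • P)⁻¹).map Complex.ofReal), ‖z‖ < 1 / C} := by
    intro ω hω
    rw [Set.mem_compl_iff, Set.mem_union] at hω
    push_neg at hω
    obtain ⟨hωB, hωN⟩ := hω
    have hXzero : ∀ i j l, P i l = 0 → X i j ω l = 0 := by
      intro i j l hPil
      obtain ⟨k, hk⟩ := hXval i j ω
      have hkl : k ≠ l := by
        rintro rfl
        apply hωN
        rw [hNbaddef]
        exact Set.mem_iUnion.mpr ⟨i, Set.mem_iUnion.mpr ⟨j, Set.mem_iUnion.mpr ⟨k,
          Set.mem_iUnion.mpr ⟨hPil, hk⟩⟩⟩⟩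
      rw [hk, Pi.single_eq_of_ne (Ne.symm hkl)]
    have hnotbad : ∀ i σ, σ ∈ F i → ω ∉ bad i σ := by
      intro i σ hσ hmem
      apply hωB
      rw [hBaddef]
      exact Set.mem_iUnion.mpr ⟨i, Set.mem_iUnion.mpr ⟨σ, Set.mem_iUnion.mpr ⟨hσ, hmem⟩⟩⟩
    have hrow : ∀ i, ∑ l, |P i l - (n:ℝ)⁻¹ * ∑ j, X i j ω l| < ε := by
      intro i
      set d : Fin N → ℝ := fun l => P i l - (n:ℝ)⁻¹ * ∑ j, X i j ω l with hddef
      set σ₀ : Fin N → Bool := fun l => decide (P i l = 0 ∨ 0 ≤ d l) with hσ₀def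
      have hσ₀F : σ₀ ∈ F i := by
        rw [hFdef]
        refine Finset.mem_filter.mpr ⟨Finset.mem_univ _, fun l hl => ?_⟩
        simp only [hσ₀def]
        exact decide_eq_true (Or.inl hl)
      have hlt : ∑ j, Z i σ₀ j ω < (n:ℝ) * ε := by
        have hnb := hnotbad i σ₀ hσ₀F
        rw [hbaddef] at hnb
        simp only [Set.mem_setOf_eq, not_le] at hnb
        exact hnb
      have hd0 : ∀ l, P i l = 0 → d l = 0 := by
        intro l hPil
        have hz : (∑ j, X i j ω l) = 0 := Finset.sum_eq_zero fun j _ => hXzero i j l hPil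
        simp [hddef, hPil, hz]
      have habs_eq : ∀ l, |d l| = s σ₀ l * d l := by
        intro l
        by_cases h0 : P i l = 0
        · rw [hd0 l h0]; simp
        · by_cases h1 : 0 ≤ d l
          · have hb : σ₀ l = true := decide_eq_true (Or.inr h1)
            have hs1 : s σ₀ l = 1 := by simp [hsdef, hb]
            rw [hs1, one_mul]
            exact abs_of_nonneg h1
          · have hb : σ₀ l = false := by
              simp only [hσ₀def]
              exact decide_eq_false (by tauto)
            have hs1 : s σ₀ l = -1 := by simp [hsdef, hb]
            rw [hs1, neg_one_mul]
            exact abs_of_neg (lt_of_not_ge h1)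
      have hn0 : (n:ℝ) ≠ 0 := Nat.cast_ne_zero.mpr hn.ne'
      have h1 : ∑ j, Z i σ₀ j ω
          = (n:ℝ) * c i σ₀ - ∑ l, s σ₀ l * ∑ j, X i j ω l := by
        simp only [hZdef]
        rw [Finset.sum_sub_distrib, Finset.sum_const, Finset.card_univ, Fintype.card_fin,
          nsmul_eq_mul]
        congr 1
        rw [Finset.sum_comm]
        exact Finset.sum_congr rfl fun l _ => (Finset.mul_sum _ _ _).symm
      have hsum_eq : ∑ l, s σ₀ l * d l = (n:ℝ)⁻¹ * ∑ j, Z i σ₀ j ω := by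
        rw [h1]
        have h2 : ∀ l, s σ₀ l * d l
            = s σ₀ l * P i l - (n:ℝ)⁻¹ * (s σ₀ l * ∑ j, X i j ω l) := by
          intro l; simp only [hddef]; ring
        rw [Finset.sum_congr rfl (fun l _ => h2 l), Finset.sum_sub_distrib, ← Finset.mul_sum]
        have h3 : c i σ₀ = ∑ l, s σ₀ l * P i l := rfl
        rw [mul_sub, ← mul_assoc, inv_mul_cancel₀ hn0, one_mul, ← h3]
      calc ∑ l, |d l| = ∑ l, s σ₀ l * d l := Finset.sum_congr rfl fun l _ => habs_eq l
        _ = (n:ℝ)⁻¹ * ∑ j, Z i σ₀ j ω := hsum_eq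
        _ < (n:ℝ)⁻¹ * ((n:ℝ) * ε) := by
            apply mul_lt_mul_of_pos_left hlt
            exact inv_pos.mpr (by exact_mod_cast hn)
        _ = ε := by
            rw [← mul_assoc, inv_mul_cancel₀ hn0, one_mul]
    simp only [Set.mem_setOf_eq]
    have hPn : ‖P‖ ≤ 1 := by
      apply norm_le_of_rows P zero_le_one
      intro i
      apply le_of_eq
      calc ∑ l, |P i l| = ∑ l, P i l :=
          Finset.sum_congr rfl fun l _ => abs_of_nonneg (hP0 i l)
        _ = 1 := hP1 i
    have hΔ : ‖P - Matrix.of (fun i l => (n : ℝ)⁻¹ * ∑ j, X i j ω l)‖ < ε := by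
      apply norm_lt_of_rows _ hεpos
      intro i
      have hri := hrow i
      simpa [Matrix.sub_apply, Matrix.of_apply] using hri
    exact spec_bound P _ hγ hC hPn (hεdef ▸ hΔ)
  -- measurability of the complement
  have hBadmeas : MeasurableSet Bad := by
    rw [hBaddef]
    refine MeasurableSet.iUnion fun i => (F i).measurableSet_biUnion fun σ _ => ?_
    rw [hbaddef]
    exact measurableSet_le measurable_const (Finset.measurable_sum _ fun j _ => hmeasZ i σ j)
  have hNbadmeas : MeasurableSet Nbad := by
    rw [hNbaddef]
    exact MeasurableSet.iUnion fun i => MeasurableSet.iUnion fun j =>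
      MeasurableSet.iUnion fun l => MeasurableSet.iUnion fun _ => hcellm i j l
  -- finish
  have hx0 : (0:ℝ) ≤ 1/(N:ℝ)^(q-1) := by positivity
  have hBN : μ (Bad ∪ Nbad) ≤ ENNReal.ofReal (1/(N:ℝ)^(q-1)) := by
    calc μ (Bad ∪ Nbad) ≤ μ Bad + μ Nbad := measure_union_le _ _
      _ = μ Bad := by rw [hNbad0, add_zero]
      _ ≤ _ := hBadle
  have hcompl : μ ((Bad ∪ Nbad)ᶜ) = 1 - μ (Bad ∪ Nbad) := by
    rw [measure_compl (hBadmeas.union hNbadmeas) (measure_ne_top μ _), measure_univ]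
  calc ENNReal.ofReal (1 - 1 / (N : ℝ) ^ (q - 1))
      ≤ 1 - ENNReal.ofReal (1/(N:ℝ)^(q-1)) := by
        rcases le_total 1 (1/(N:ℝ)^(q-1)) with hor | hor
        · rw [ENNReal.ofReal_eq_zero.mpr (by linarith)]
          exact zero_le
        · apply ENNReal.le_sub_of_add_le_right ENNReal.ofReal_ne_top
          rw [← ENNReal.ofReal_add (by linarith) hx0]
          norm_num
    _ ≤ 1 - μ (Bad ∪ Nbad) := tsub_le_tsub_left hBN 1
    _ = μ ((Bad ∪ Nbad)ᶜ) := hcompl.symm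
    _ ≤ _ := measure_mono hsubset
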